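/- arXiv:1604.07151 — 5 statements merged into one kernel-verified Lean document; each statement's English description precedes it below -/
import Mathlib

section
/- Let V_c = V(P_{X|Y}|P_Y) > 0 and V_j = V(P_XY) > 0, let θ = (θ1, θ2) with θ1 > 0 and θ2 > −θ1, and define f(γ) = (θ1 + (1−γ)θ2)² / (2(γ V_c + (1−γ) V_j)) for γ ∈ [0,1], g1 = (V_j − V_c)/(2 V_c), and g2 = min{ √(V_j/V_c) − 1, (V_j − V_c)/(V_j + V_c) }. Then inf_{γ∈[0,1]} f(γ) = min{ θ1²/(2 V_c), (θ1+θ2)²/(2 V_j) } holds if and only if θ2/θ1 ≥ g1 or θ2/θ1 ≤ g2. (Equivalently: the streaming moderate deviations bound of Theorem 2, Case (ii), equals T times the non-streaming Case (ii) constant exactly for these directions θ.) -/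
open Real Filter Set

noncomputable section

namespace SWMD

variable {X Y : Type} [Fintype X] [Fintype Y]

/-- `P` is a probability mass function on `X × Y`. -/
def IsPMF2 (P : X → Y → ℝ) : Prop :=
  (∀ x y, 0 ≤ P x y) ∧ (∑ x, ∑ y, P x y) = 1

/-- Marginal pmf of `X`. -/
def margX (P : X → Y → ℝ) (x : X) : ℝ := ∑ y, P x y

/-- Marginal pmf of `Y`. -/
def margY (P : X → Y → ℝ) (y : Y) : ℝ := ∑ x, P x y

/-- Joint entropy `H(P_XY)` (natural log, with the convention `0 log 0 = 0`,
which holds automatically since `Real.log 0 = 0`). -/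
def Hjoint (P : X → Y → ℝ) : ℝ := -∑ x, ∑ y, P x y * Real.log (P x y)

/-- Entropy of the `X`-marginal, `H(P_X)`. -/
def HmargX (P : X → Y → ℝ) : ℝ := -∑ x, margX P x * Real.log (margX P x)

/-- Entropy of the `Y`-marginal, `H(P_Y)`. -/
def HmargY (P : X → Y → ℝ) : ℝ := -∑ y, margY P y * Real.log (margY P y)

/-- Conditional entropy `H(P_{X|Y}|P_Y)`. -/
def HcondXY (P : X → Y → ℝ) : ℝ :=
  -∑ x, ∑ y, P x y * Real.log (P x y / margY P y)

/-- Conditional entropy `H(P_{Y|X}|P_X)`. -/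
def HcondYX (P : X → Y → ℝ) : ℝ :=
  -∑ x, ∑ y, P x y * Real.log (P x y / margX P x)

/-- Joint varentropy `V(P_XY)`. -/
def Vjoint (P : X → Y → ℝ) : ℝ :=
  ∑ x, ∑ y, P x y * (-Real.log (P x y) - Hjoint P) ^ 2

/-- Conditional varentropy `V(P_{X|Y}|P_Y)`. -/
def VcondXY (P : X → Y → ℝ) : ℝ :=
  ∑ x, ∑ y, P x y * (-Real.log (P x y / margY P y) - HcondXY P) ^ 2

/-- Conditional varentropy `V(P_{Y|X}|P_X)`. -/
def VcondYX (P : X → Y → ℝ) : ℝ :=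
  ∑ x, ∑ y, P x y * (-Real.log (P x y / margX P x) - HcondYX P) ^ 2


private lemma min_sqrt_eq (a b : ℝ) (ha : 0 < a) (hb : 0 < b) :
    min (Real.sqrt (b / a) - 1) ((b - a) / (b + a)) = (b - a) / (b + a) := by
  apply min_eq_right
  set p := Real.sqrt a with hpdef
  set q := Real.sqrt b with hqdef
  have hp : p ^ 2 = a := Real.sq_sqrt ha.le
  have hq : q ^ 2 = b := Real.sq_sqrt hb.le
  have hp0 : 0 < p := Real.sqrt_pos.2 ha
  have hq0 : 0 < q := Real.sqrt_pos.2 hb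
  have hdiv : Real.sqrt (b / a) = q / p := Real.sqrt_div hb.le a
  have h1 : Real.sqrt (b / a) - 1 = (q - p) / p := by
    rw [hdiv]; field_simp
  rw [h1, div_le_div_iff₀ (by linarith) hp0]
  nlinarith [mul_nonneg hq0.le (sq_nonneg (q - p))]

set_option maxHeartbeats 800000 in
private lemma core (a b θ1 θ2 : ℝ) (ha : 0 < a) (hb : 0 < b)
    (hθ1 : 0 < θ1) (hθ2 : -θ1 < θ2) :
    (sInf ((fun γ : ℝ => (θ1 + (1 - γ) * θ2) ^ 2 /
          (2 * (γ * a + (1 - γ) * b))) '' Set.Icc 0 1)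
        = min (θ1 ^ 2 / (2 * a)) ((θ1 + θ2) ^ 2 / (2 * b)))
      ↔ ((b - a) / (2 * a) ≤ θ2 / θ1 ∨ θ2 / θ1 ≤ (b - a) / (b + a)) := by
  have hsum : 0 < θ1 + θ2 := by linarith
  have hA_iff : (b - a) / (2 * a) ≤ θ2 / θ1 ↔ θ1 * (b - a) ≤ 2 * a * θ2 := by
    rw [div_le_div_iff₀ (by positivity) hθ1]
    constructor <;> intro h <;> nlinarith [h]
  have hB_iff : θ2 / θ1 ≤ (b - a) / (b + a) ↔ θ2 * (b + a) ≤ θ1 * (b - a) := by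
    rw [div_le_div_iff₀ hθ1 (by linarith)]
    constructor <;> intro h <;> nlinarith [h]
  rw [hA_iff, hB_iff]
  have hden : ∀ γ ∈ Set.Icc (0:ℝ) 1, 0 < 2 * (γ * a + (1 - γ) * b) := by
    rintro γ ⟨h0, h1⟩
    have hm : 0 < min a b := lt_min ha hb
    nlinarith [mul_le_mul_of_nonneg_left (min_le_left a b) h0,
      mul_le_mul_of_nonneg_left (min_le_right a b) (show (0:ℝ) ≤ 1 - γ by linarith)]
  have hS1 : θ1 ^ 2 / (2 * a) ∈ (fun γ : ℝ => (θ1 + (1 - γ) * θ2) ^ 2 /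
      (2 * (γ * a + (1 - γ) * b))) '' Set.Icc 0 1 := by
    refine ⟨1, ⟨by norm_num, le_refl 1⟩, by norm_num⟩
  have hS0 : (θ1 + θ2) ^ 2 / (2 * b) ∈ (fun γ : ℝ => (θ1 + (1 - γ) * θ2) ^ 2 /
      (2 * (γ * a + (1 - γ) * b))) '' Set.Icc 0 1 := by
    refine ⟨0, ⟨le_refl 0, by norm_num⟩, by norm_num⟩
  have hbdd : BddBelow ((fun γ : ℝ => (θ1 + (1 - γ) * θ2) ^ 2 /
      (2 * (γ * a + (1 - γ) * b))) '' Set.Icc 0 1) := by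
    refine ⟨0, ?_⟩
    rintro x ⟨γ, hγ, rfl⟩
    exact div_nonneg (sq_nonneg _) (hden γ hγ).le
  constructor
  · -- forward: contrapositive
    intro heq
    by_contra hc
    push_neg at hc
    obtain ⟨hA', hB'⟩ := hc
    -- hA' : 2 * a * θ2 < θ1 * (b - a), hB' : θ1 * (b - a) < θ2 * (b + a)
    have hd : 0 < θ2 * (b - a) := by nlinarith
    have hθ2ne : θ2 ≠ 0 := by intro h; rw [h] at hd; simp at hd
    have hθ2sq : 0 < θ2 ^ 2 := lt_of_le_of_ne (sq_nonneg _) (Ne.symm (pow_ne_zero 2 hθ2ne))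
    set u0 : ℝ := θ1 * (θ1 * (b - a) - 2 * a * θ2) / (a * θ2 ^ 2) with hu0def
    set u1 : ℝ := (b * θ1 ^ 2 - a * (θ1 + θ2) ^ 2) / (b * θ2 ^ 2) with hu1def
    have hu0pos : 0 < u0 := by
      apply div_pos _ (by positivity)
      nlinarith
    have hu11 : u1 < 1 := by
      rw [hu1def, div_lt_one (by positivity)]
      nlinarith [mul_lt_mul_of_pos_left hB' hsum]
    have hu10 : u1 < u0 := by
      rw [hu1def, hu0def, div_lt_div_iff₀ (by positivity) (by positivity)]
      have hne : θ1 * (b - a) - a * θ2 ≠ 0 := by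
        intro h
        have h1 : a * θ2 < 0 := by nlinarith
        have h2 : 0 < θ2 * b := by nlinarith
        have hθ2pos : 0 < θ2 := by
          by_contra hcc
          push_neg at hcc
          nlinarith
        nlinarith [mul_pos ha hθ2pos]
      have hkey : 0 < (θ1 * (b - a) - a * θ2) ^ 2 :=
        lt_of_le_of_ne (sq_nonneg _) (Ne.symm (pow_ne_zero 2 hne))
      nlinarith [mul_pos hθ2sq hkey]
    set u : ℝ := (max u1 0 + min u0 1) / 2 with hudef
    have hmaxmin : max u1 0 < min u0 1 := by
      rw [max_lt_iff, lt_min_iff, lt_min_iff]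
      exact ⟨⟨hu10, hu11⟩, ⟨hu0pos, one_pos⟩⟩
    have hlow : max u1 0 < u := by rw [hudef]; linarith
    have hhigh : u < min u0 1 := by rw [hudef]; linarith
    have hupos : 0 < u := lt_of_le_of_lt (le_max_right _ _) hlow
    have hult1 : u < 1 := lt_of_lt_of_le hhigh (min_le_right _ _)
    have hultu0 : u < u0 := lt_of_lt_of_le hhigh (min_le_left _ _)
    have hu1ltu : u1 < u := lt_of_le_of_lt (le_max_left _ _) hlow
    have hq0 : a * θ2 ^ 2 * u + 2 * a * θ1 * θ2 - θ1 ^ 2 * (b - a) < 0 := by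
      rw [hu0def, lt_div_iff₀ (by positivity)] at hultu0
      nlinarith [hultu0]
    have hq1 : 0 < b * θ2 ^ 2 * u + a * (θ1 + θ2) ^ 2 - b * θ1 ^ 2 := by
      rw [hu1def, div_lt_iff₀ (by positivity)] at hu1ltu
      nlinarith [hu1ltu]
    have hγmem : (1 - u) ∈ Set.Icc (0:ℝ) 1 := ⟨by linarith, by linarith⟩
    have hdenγ : 0 < 2 * ((1 - u) * a + (1 - (1 - u)) * b) := hden _ hγmem
    have hfmem : (θ1 + (1 - (1 - u)) * θ2) ^ 2 / (2 * ((1 - u) * a + (1 - (1 - u)) * b))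
        ∈ (fun γ : ℝ => (θ1 + (1 - γ) * θ2) ^ 2 /
          (2 * (γ * a + (1 - γ) * b))) '' Set.Icc 0 1 := ⟨1 - u, hγmem, rfl⟩
    have hlt1 : (θ1 + (1 - (1 - u)) * θ2) ^ 2 / (2 * ((1 - u) * a + (1 - (1 - u)) * b))
        < θ1 ^ 2 / (2 * a) := by
      rw [div_lt_div_iff₀ hdenγ (by positivity)]
      nlinarith [mul_neg_of_pos_of_neg hupos hq0]
    have hlt0 : (θ1 + (1 - (1 - u)) * θ2) ^ 2 / (2 * ((1 - u) * a + (1 - (1 - u)) * b))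
        < (θ1 + θ2) ^ 2 / (2 * b) := by
      rw [div_lt_div_iff₀ hdenγ (by positivity)]
      nlinarith [mul_pos (show (0:ℝ) < 1 - u by linarith) hq1]
    have hle := csInf_le hbdd hfmem
    rw [heq] at hle
    have h := lt_min hlt1 hlt0
    linarith
  · -- backward
    intro hcond
    apply le_antisymm (le_min (csInf_le hbdd hS1) (csInf_le hbdd hS0))
    apply le_csInf ⟨_, hS1⟩
    rintro x ⟨γ, hγ, rfl⟩
    obtain ⟨hγ0, hγ1⟩ := hγ
    have hdenγ : 0 < 2 * (γ * a + (1 - γ) * b) := hden γ ⟨hγ0, hγ1⟩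
    show min (θ1 ^ 2 / (2 * a)) ((θ1 + θ2) ^ 2 / (2 * b))
        ≤ (θ1 + (1 - γ) * θ2) ^ 2 / (2 * (γ * a + (1 - γ) * b))
    rcases hcond with hA | hB
    · refine le_trans (min_le_left _ _) ?_
      rw [div_le_div_iff₀ (by positivity) hdenγ]
      have h1 : 0 ≤ (1 - γ) * θ1 * (2 * a * θ2 - θ1 * (b - a)) := by
        apply mul_nonneg (mul_nonneg (by linarith) hθ1.le)
        linarith
      have h2 : 0 ≤ a * ((1 - γ) * θ2) ^ 2 := by positivity
      nlinarith [h1, h2]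
    · refine le_trans (min_le_right _ _) ?_
      rw [div_le_div_iff₀ (by positivity) hdenγ]
      have hs : (θ1 + θ2) * (b + a) ≤ 2 * b * θ1 := by nlinarith [hB]
      have hq0 : a * (θ1 + θ2) ^ 2 ≤ b * θ1 ^ 2 := by
        have H : (θ1 + θ2) * (b + a) * ((θ1 + θ2) * (b + a)) ≤ 2 * b * θ1 * (2 * b * θ1) :=
          mul_le_mul hs hs (by positivity) (by positivity)
        have H2 : a * ((θ1 + θ2) * (b + a)) ^ 2 ≤ a * (2 * b * θ1) ^ 2 := by nlinarith [H]
        nlinarith [H2, mul_nonneg (mul_nonneg hb.le (sq_nonneg θ1)) (sq_nonneg (a - b)),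
          sq_nonneg (a + b), mul_pos (mul_pos (show (0:ℝ) < a + b by linarith)
            (show (0:ℝ) < a + b by linarith)) hb]
      have hq1 : b * θ2 ^ 2 + a * (θ1 + θ2) ^ 2 - b * θ1 ^ 2 ≤ 0 := by
        nlinarith [mul_nonneg hsum.le (sub_nonneg.2 hB)]
      have h3 : 0 ≤ γ ^ 2 * (b * θ1 ^ 2 - a * (θ1 + θ2) ^ 2) :=
        mul_nonneg (sq_nonneg _) (by linarith)
      have h4 : 0 ≤ (1 - γ) * γ * (b * θ1 ^ 2 - b * θ2 ^ 2 - a * (θ1 + θ2) ^ 2) :=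
        mul_nonneg (mul_nonneg (by linarith) hγ0) (by linarith)
      nlinarith [h3, h4]


/-- **Proposition 1** (conditions for obtaining a multiplicative gain of `T`):
with `V_c = V(P_{X|Y}|P_Y) > 0`, `V_j = V(P_XY) > 0`, `θ1 > 0`, `θ2 > -θ1`, and
`f(γ) = (θ1+(1−γ)θ2)²/(2(γ V_c+(1−γ)V_j))`, the equality
`inf_{γ∈[0,1]} f(γ) = min{θ1²/(2V_c), (θ1+θ2)²/(2V_j)}` holds if and only if
`θ2/θ1 ≥ g1 = (V_j−V_c)/(2V_c)` or
`θ2/θ1 ≤ g2 = min{√(V_j/V_c)−1, (V_j−V_c)/(V_j+V_c)}`. -/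
theorem gain_T_iff [Nonempty X] [Nonempty Y]
    (P : X → Y → ℝ) (hP : IsPMF2 P)
    (hVc : 0 < VcondXY P) (hVj : 0 < Vjoint P)
    (θ1 θ2 : ℝ) (hθ1 : 0 < θ1) (hθ2 : -θ1 < θ2) :
    (sInf ((fun γ : ℝ => (θ1 + (1 - γ) * θ2) ^ 2 /
          (2 * (γ * VcondXY P + (1 - γ) * Vjoint P))) '' Set.Icc 0 1)
        = min (θ1 ^ 2 / (2 * VcondXY P)) ((θ1 + θ2) ^ 2 / (2 * Vjoint P)))
      ↔ ((Vjoint P - VcondXY P) / (2 * VcondXY P) ≤ θ2 / θ1 ∨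
          θ2 / θ1 ≤ min (Real.sqrt (Vjoint P / VcondXY P) - 1)
            ((Vjoint P - VcondXY P) / (Vjoint P + VcondXY P))) := by
  rw [min_sqrt_eq _ _ hVc hVj]
  exact core (VcondXY P) (Vjoint P) θ1 θ2 hVc hVj hθ1 hθ2

end SWMD
end
end

section
/- Define E_XY : [0,1] → ℝ by E_XY(ρ) = (1+ρ) log Σ_{(x,y): P_XY(x,y)>0} P_XY(x,y)^{1/(1+ρ)}. Then E_XY is three times differentiable on [0,1] and satisfies: (a) E_XY′(0) = H(P_XY); (b) E_XY″(0) = V(P_XY); (c) E_XY″(ρ) ≥ 0 for all ρ ∈ [0,1]; and (d) there exists a finite constant M_XY > 0 such that |E_XY‴(ρ)| ≤ M_XY for all ρ ∈ [0,1]. -/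
open Real Filter Set

noncomputable section

namespace SWMD

variable {X Y : Type} [Fintype X] [Fintype Y]

open scoped Classical

/-- The Gallager-type function
`E_XY(ρ) = (1+ρ) log Σ_{(x,y): P(x,y)>0} P(x,y)^{1/(1+ρ)}`. -/
def Exy (P : X → Y → ℝ) (ρ : ℝ) : ℝ :=
  (1 + ρ) * Real.log (∑ x, ∑ y, if 0 < P x y then P x y ^ ((1 : ℝ) / (1 + ρ)) else 0)

section Aux

variable (P : X → Y → ℝ)

/-- Support of `P` as a finset of pairs. -/
def supp : Finset (X × Y) := Finset.univ.filter fun q => 0 < P q.1 q.2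

/-- Tilted moment sums: `Zk k β = Σ_{p>0} (log p)^k p^β`. -/
def Zk (k : ℕ) (β : ℝ) : ℝ :=
  ∑ q ∈ supp P, (Real.log (P q.1 q.2)) ^ k * Real.exp (Real.log (P q.1 q.2) * β)

def bb (ρ : ℝ) : ℝ := (1 + ρ)⁻¹

def D1 (ρ : ℝ) : ℝ :=
  Real.log (Zk P 0 (bb ρ)) - bb ρ * (Zk P 1 (bb ρ) / Zk P 0 (bb ρ))

def Wf (β : ℝ) : ℝ :=
  (Zk P 2 β * Zk P 0 β - (Zk P 1 β) ^ 2) / (Zk P 0 β) ^ 2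

def D2 (ρ : ℝ) : ℝ := (bb ρ) ^ 3 * Wf P (bb ρ)

lemma Exy_eq (ρ : ℝ) : Exy P ρ = (1 + ρ) * Real.log (Zk P 0 (bb ρ)) := by
  unfold Exy Zk bb supp
  congr 1
  congr 1
  have h1 : (∑ x, ∑ y, if 0 < P x y then P x y ^ ((1:ℝ) / (1 + ρ)) else 0)
      = ∑ q : X × Y, (if 0 < P q.1 q.2 then P q.1 q.2 ^ ((1:ℝ) / (1 + ρ)) else 0) :=
    (Fintype.sum_prod_type'
      (fun x y => (if 0 < P x y then P x y ^ ((1:ℝ) / (1 + ρ)) else 0 : ℝ))).symm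
  rw [h1, Finset.sum_filter]
  refine Finset.sum_congr rfl fun q _ => ?_
  by_cases h : 0 < P q.1 q.2
  · simp only [h, if_true, pow_zero, one_mul, Real.rpow_def_of_pos h, one_div]
  · simp [h]

lemma Zk_hasDerivAt (k : ℕ) (β : ℝ) : HasDerivAt (Zk P k) (Zk P (k + 1) β) β := by
  unfold Zk
  refine HasDerivAt.fun_sum fun q _ => ?_
  have h : HasDerivAt (fun β : ℝ => Real.exp (Real.log (P q.1 q.2) * β))
      (Real.exp (Real.log (P q.1 q.2) * β) * (Real.log (P q.1 q.2) * 1)) β :=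
    ((hasDerivAt_id β).const_mul _).exp
  have h2 := h.const_mul ((Real.log (P q.1 q.2)) ^ k)
  refine h2.congr_deriv ?_
  symm
  ring

lemma Zk_contDiff (k : ℕ) : ContDiff ℝ ⊤ (Zk P k) := by
  unfold Zk
  refine ContDiff.sum fun q _ => ?_
  exact contDiff_const.mul ((contDiff_const.mul contDiff_id).exp)

lemma supp_nonempty (hP : IsPMF2 P) : (supp P).Nonempty := by
  by_contra h
  rw [Finset.not_nonempty_iff_eq_empty] at h
  have hz : ∀ x y, P x y = 0 := by
    intro x y
    by_contra hxy
    have hpos : 0 < P x y := lt_of_le_of_ne (hP.1 x y) (Ne.symm hxy)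
    have : (⟨x, y⟩ : X × Y) ∈ supp P := by
      simp [supp, hpos]
    rw [h] at this
    exact absurd this (Finset.notMem_empty _)
  have := hP.2
  simp only [hz, Finset.sum_const_zero] at this
  norm_num at this

lemma Zk_pos (h : (supp P).Nonempty) (β : ℝ) : 0 < Zk P 0 β := by
  unfold Zk
  refine Finset.sum_pos (fun q _ => ?_) h
  simp [Real.exp_pos]

/-- Sum over the support equals the full double sum when the summand vanishes off-support. -/
lemma sum_supp (hP : IsPMF2 P) (f : X × Y → ℝ) (hf : ∀ q : X × Y, P q.1 q.2 = 0 → f q = 0) :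
    ∑ q ∈ supp P, f q = ∑ x, ∑ y, f (x, y) := by
  rw [← Fintype.sum_prod_type]
  refine Finset.sum_subset (Finset.filter_subset _ _) fun q _ hq => ?_
  have : ¬ 0 < P q.1 q.2 := by
    intro h; exact hq (by simp [supp, h])
  exact hf q (le_antisymm (not_lt.1 this) (hP.1 q.1 q.2))

lemma sum_supp_P (hP : IsPMF2 P) : ∑ q ∈ supp P, P q.1 q.2 = 1 := by
  rw [sum_supp P hP (fun q => P q.1 q.2) (fun q h => h)]
  exact hP.2

lemma sum_supp_Plog (hP : IsPMF2 P) :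
    ∑ q ∈ supp P, P q.1 q.2 * Real.log (P q.1 q.2) = -Hjoint P := by
  rw [sum_supp P hP (fun q => P q.1 q.2 * Real.log (P q.1 q.2)) (fun q h => by simp [h])]
  simp [Hjoint]

lemma Zk0_one (hP : IsPMF2 P) : Zk P 0 1 = 1 := by
  have h : Zk P 0 1 = ∑ q ∈ supp P, P q.1 q.2 := by
    unfold Zk
    refine Finset.sum_congr rfl fun q hq => ?_
    have hq' : 0 < P q.1 q.2 := (Finset.mem_filter.1 hq).2
    simp [Real.exp_log hq']
  rw [h, sum_supp_P P hP]

lemma Zk1_one (hP : IsPMF2 P) : Zk P 1 1 = -Hjoint P := by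
  have h : Zk P 1 1 = ∑ q ∈ supp P, P q.1 q.2 * Real.log (P q.1 q.2) := by
    unfold Zk
    refine Finset.sum_congr rfl fun q hq => ?_
    have hq' : 0 < P q.1 q.2 := (Finset.mem_filter.1 hq).2
    simp [Real.exp_log hq', mul_comm]
  rw [h, sum_supp_Plog P hP]

lemma sum_supp_Plog2 (hP : IsPMF2 P) :
    Zk P 2 1 = ∑ q ∈ supp P, P q.1 q.2 * (Real.log (P q.1 q.2)) ^ 2 := by
  unfold Zk
  refine Finset.sum_congr rfl fun q hq => ?_
  have hq' : 0 < P q.1 q.2 := (Finset.mem_filter.1 hq).2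
  simp [Real.exp_log hq', mul_comm]

lemma Zk2_one (hP : IsPMF2 P) : Zk P 2 1 = Vjoint P + (Hjoint P) ^ 2 := by
  have hV : Vjoint P = ∑ q ∈ supp P,
      P q.1 q.2 * (-Real.log (P q.1 q.2) - Hjoint P) ^ 2 := by
    rw [sum_supp P hP (fun q => P q.1 q.2 * (-Real.log (P q.1 q.2) - Hjoint P) ^ 2)
      (fun q h => by simp [h])]
    rfl
  have hexp : ∀ q ∈ supp P,
      P q.1 q.2 * (-Real.log (P q.1 q.2) - Hjoint P) ^ 2
      = P q.1 q.2 * (Real.log (P q.1 q.2)) ^ 2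
        + (2 * Hjoint P) * (P q.1 q.2 * Real.log (P q.1 q.2))
        + (Hjoint P) ^ 2 * P q.1 q.2 := fun q _ => by ring
  rw [hV, Finset.sum_congr rfl hexp, Finset.sum_add_distrib, Finset.sum_add_distrib,
    ← Finset.mul_sum, ← Finset.mul_sum, sum_supp_Plog P hP, sum_supp_P P hP,
    sum_supp_Plog2 P hP]
  ring

/-- Cauchy–Schwarz: `Z1 β ^ 2 ≤ Z2 β * Z0 β`. -/
lemma Zk_cs (β : ℝ) : (Zk P 1 β) ^ 2 ≤ Zk P 2 β * Zk P 0 β := by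
  have h := Finset.sum_mul_sq_le_sq_mul_sq (supp P)
    (fun q => Real.log (P q.1 q.2) * Real.exp (Real.log (P q.1 q.2) * β / 2))
    (fun q => Real.exp (Real.log (P q.1 q.2) * β / 2))
  have e1 : ∀ q ∈ supp P,
      (Real.log (P q.1 q.2) * Real.exp (Real.log (P q.1 q.2) * β / 2))
        * Real.exp (Real.log (P q.1 q.2) * β / 2)
      = (Real.log (P q.1 q.2)) ^ 1 * Real.exp (Real.log (P q.1 q.2) * β) := by
    intro q _
    rw [mul_assoc, ← Real.exp_add, pow_one]
    congr 1
    ring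
  have e2 : ∀ q ∈ supp P,
      (Real.log (P q.1 q.2) * Real.exp (Real.log (P q.1 q.2) * β / 2)) ^ 2
      = (Real.log (P q.1 q.2)) ^ 2 * Real.exp (Real.log (P q.1 q.2) * β) := by
    intro q _
    rw [mul_pow]
    congr 1
    rw [pow_two, ← Real.exp_add]
    congr 1
    ring
  have e3 : ∀ q ∈ supp P,
      (Real.exp (Real.log (P q.1 q.2) * β / 2)) ^ 2
      = (Real.log (P q.1 q.2)) ^ 0 * Real.exp (Real.log (P q.1 q.2) * β) := by
    intro q _
    rw [pow_zero, one_mul, pow_two, ← Real.exp_add]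
    congr 1
    ring
  rw [Finset.sum_congr rfl e1, Finset.sum_congr rfl e2, Finset.sum_congr rfl e3] at h
  exact h

lemma bb_hasDerivAt {ρ : ℝ} (h : ρ ≠ -1) : HasDerivAt bb (-(bb ρ) ^ 2) ρ := by
  have hne : (1 : ℝ) + ρ ≠ 0 := fun hc => h (by linarith)
  have h1 : HasDerivAt (fun y : ℝ => 1 + y) 1 ρ := (hasDerivAt_id ρ).const_add 1
  have h2 := h1.inv hne
  refine h2.congr_deriv ?_
  symm
  simp only [bb, inv_pow]
  ring

lemma Exy_hasDerivAt (hP : IsPMF2 P) {ρ : ℝ} (h : ρ ≠ -1) :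
    HasDerivAt (Exy P) (D1 P ρ) ρ := by
  have hne : (1 : ℝ) + ρ ≠ 0 := fun hc => h (by linarith)
  have hZne : Zk P 0 (bb ρ) ≠ 0 := (Zk_pos P (supp_nonempty P hP) _).ne'
  have hb := bb_hasDerivAt h
  have hZ : HasDerivAt (fun ρ => Zk P 0 (bb ρ)) (Zk P 1 (bb ρ) * (-(bb ρ) ^ 2)) ρ :=
    (Zk_hasDerivAt P 0 (bb ρ)).comp ρ hb
  have hlog := hZ.log hZne
  have h1 : HasDerivAt (fun y : ℝ => 1 + y) 1 ρ := (hasDerivAt_id ρ).const_add 1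
  have hm := h1.mul hlog
  have hfun : Exy P = fun ρ => (1 + ρ) * Real.log (Zk P 0 (bb ρ)) :=
    funext fun ρ => Exy_eq P ρ
  rw [hfun]
  have hb1 : (1 + ρ) * bb ρ = 1 := by
    simp only [bb]
    exact mul_inv_cancel₀ hne
  refine hm.congr_deriv ?_
  symm
  unfold D1
  linear_combination (bb ρ * Zk P 1 (bb ρ) / Zk P 0 (bb ρ)) * hb1

lemma D1_hasDerivAt (hP : IsPMF2 P) {ρ : ℝ} (h : ρ ≠ -1) :
    HasDerivAt (D1 P) (D2 P ρ) ρ := by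
  have hZne : Zk P 0 (bb ρ) ≠ 0 := (Zk_pos P (supp_nonempty P hP) _).ne'
  have hb := bb_hasDerivAt h
  have hZ : HasDerivAt (fun ρ => Zk P 0 (bb ρ)) (Zk P 1 (bb ρ) * (-(bb ρ) ^ 2)) ρ :=
    (Zk_hasDerivAt P 0 (bb ρ)).comp ρ hb
  have hlog := hZ.log hZne
  have hq : HasDerivAt (fun β => Zk P 1 β / Zk P 0 β)
      ((Zk P 2 (bb ρ) * Zk P 0 (bb ρ) - Zk P 1 (bb ρ) * Zk P 1 (bb ρ)) / (Zk P 0 (bb ρ)) ^ 2)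
      (bb ρ) :=
    (Zk_hasDerivAt P 1 (bb ρ)).div (Zk_hasDerivAt P 0 (bb ρ)) hZne
  have hqc := hq.comp ρ hb
  have hm := hb.mul hqc
  have hfin := hlog.sub hm
  refine hfin.congr_deriv ?_
  symm
  unfold D2 Wf
  simp only [Function.comp_apply]
  ring

lemma deriv_Exy_eq (hP : IsPMF2 P) {ρ : ℝ} (h : ρ ≠ -1) :
    deriv (Exy P) ρ = D1 P ρ := (Exy_hasDerivAt P hP h).deriv

lemma deriv2_Exy_eq (hP : IsPMF2 P) {ρ : ℝ} (h : ρ ≠ -1) :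
    deriv (deriv (Exy P)) ρ = D2 P ρ := by
  have hU : {(-1 : ℝ)}ᶜ ∈ nhds ρ := (isOpen_compl_singleton).mem_nhds h
  have hev : deriv (Exy P) =ᶠ[nhds ρ] D1 P :=
    Filter.eventually_of_mem hU fun x hx => deriv_Exy_eq P hP hx
  rw [hev.deriv_eq]
  exact (D1_hasDerivAt P hP h).deriv

lemma Wf_contDiff (hP : IsPMF2 P) : ContDiff ℝ ⊤ (Wf P) := by
  have hZne : ∀ β, (Zk P 0 β) ^ 2 ≠ 0 :=
    fun β => pow_ne_zero _ (Zk_pos P (supp_nonempty P hP) β).ne'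
  exact (((Zk_contDiff P 2).mul (Zk_contDiff P 0)).sub ((Zk_contDiff P 1).pow 2)).div
    ((Zk_contDiff P 0).pow 2) hZne

lemma bb_contDiffOn : ContDiffOn ℝ ⊤ bb {(-1 : ℝ)}ᶜ := by
  refine ContDiffOn.inv ((contDiff_const.add contDiff_id).contDiffOn) fun x hx => ?_
  have : x ≠ -1 := hx
  intro hc
  exact this (by linarith)

lemma D2_contDiffOn (hP : IsPMF2 P) : ContDiffOn ℝ ⊤ (D2 P) {(-1 : ℝ)}ᶜ := by
  have hb := bb_contDiffOn
  exact (hb.pow 3).mul ((Wf_contDiff P hP).comp_contDiffOn hb)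

end Aux

/-- **Lemma 1**: `E_XY` is three times differentiable on `[0,1]` (derivatives at
the endpoints being one-sided, i.e. taken for the globally defined function
given by the same formula), with `E_XY′(0) = H(P_XY)`, `E_XY″(0) = V(P_XY)`,
`E_XY″ ≥ 0` on `[0,1]`, and a finite positive bound `M_XY` on `|E_XY‴|` over
`[0,1]`. -/
theorem Exy_derivatives [Nonempty X] [Nonempty Y]
    (P : X → Y → ℝ) (hP : IsPMF2 P) :
    (∀ ρ ∈ Set.Icc (0:ℝ) 1, ContDiffAt ℝ 3 (Exy P) ρ) ∧
    deriv (Exy P) 0 = Hjoint P ∧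
    deriv (deriv (Exy P)) 0 = Vjoint P ∧
    (∀ ρ ∈ Set.Icc (0:ℝ) 1, 0 ≤ deriv (deriv (Exy P)) ρ) ∧
    (∃ M : ℝ, 0 < M ∧ ∀ ρ ∈ Set.Icc (0:ℝ) 1,
      |deriv (deriv (deriv (Exy P))) ρ| ≤ M) := by
  have hsupp := supp_nonempty P hP
  have hne : ∀ ρ ∈ Set.Icc (0:ℝ) 1, ρ ≠ -1 := by
    intro ρ hρ hc
    have := hρ.1
    rw [hc] at this
    linarith
  have h0 : (0:ℝ) ≠ -1 := by norm_num
  have hb0 : bb 0 = 1 := by norm_num [bb]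
  refine ⟨?_, ?_, ?_, ?_, ?_⟩
  · -- ContDiffAt 3
    intro ρ hρ
    have h1ρ : (1:ℝ) + ρ ≠ 0 := by
      have := hρ.1
      intro hc
      linarith
    have hfun : Exy P = fun ρ => (1 + ρ) * Real.log (Zk P 0 (bb ρ)) :=
      funext (Exy_eq P)
    rw [hfun]
    have hbAt : ContDiffAt ℝ 3 bb ρ := by
      have h1 : ContDiffAt ℝ 3 (fun y : ℝ => 1 + y) ρ :=
        (contDiff_const.add contDiff_id).contDiffAt
      exact h1.inv h1ρ
    have hZAt0 : ContDiffAt ℝ 3 (Zk P 0 ∘ bb) ρ :=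
      ContDiffAt.comp ρ ((Zk_contDiff P 0).contDiffAt.of_le le_top) hbAt
    have hZAt : ContDiffAt ℝ 3 (fun ρ => Zk P 0 (bb ρ)) ρ := hZAt0
    have hlogAt := hZAt.log (Zk_pos P hsupp _).ne'
    exact (contDiffAt_const.add contDiffAt_id).mul hlogAt
  · -- first derivative at 0
    rw [deriv_Exy_eq P hP h0]
    unfold D1
    rw [hb0, Zk0_one P hP, Zk1_one P hP]
    simp
  · -- second derivative at 0
    rw [deriv2_Exy_eq P hP h0]
    unfold D2 Wf
    rw [hb0, Zk0_one P hP, Zk1_one P hP, Zk2_one P hP]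
    ring
  · -- convexity
    intro ρ hρ
    rw [deriv2_Exy_eq P hP (hne ρ hρ)]
    unfold D2 Wf
    have hb_nonneg : 0 ≤ bb ρ := by
      have := hρ.1
      simp only [bb]
      positivity
    exact mul_nonneg (pow_nonneg hb_nonneg 3)
      (div_nonneg (sub_nonneg.2 (Zk_cs P (bb ρ))) (sq_nonneg _))
  · -- bounded third derivative
    have hU : IsOpen ({(-1:ℝ)}ᶜ) := isOpen_compl_singleton
    have hcont : ContinuousOn (deriv (D2 P)) {(-1:ℝ)}ᶜ :=
      (D2_contDiffOn P hP).continuousOn_deriv_of_isOpen hU le_top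
    have hIcc : Set.Icc (0:ℝ) 1 ⊆ {(-1:ℝ)}ᶜ := fun ρ hρ => hne ρ hρ
    have heq : ∀ ρ ∈ Set.Icc (0:ℝ) 1,
        deriv (deriv (deriv (Exy P))) ρ = deriv (D2 P) ρ := by
      intro ρ hρ
      have hmem : {(-1:ℝ)}ᶜ ∈ nhds ρ := hU.mem_nhds (hIcc hρ)
      have hev : deriv (deriv (Exy P)) =ᶠ[nhds ρ] D2 P :=
        Filter.eventually_of_mem hmem fun x hx => deriv2_Exy_eq P hP hx
      exact hev.deriv_eq
    have hcont2 : ContinuousOn (deriv (deriv (deriv (Exy P)))) (Set.Icc (0:ℝ) 1) :=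
      (hcont.mono hIcc).congr heq
    obtain ⟨C, hC⟩ := isCompact_Icc.exists_bound_of_continuousOn hcont2
    refine ⟨max C 1, lt_of_lt_of_le one_pos (le_max_right _ _), fun ρ hρ => ?_⟩
    have := hC ρ hρ
    rw [Real.norm_eq_abs] at this
    exact le_trans this (le_max_left _ _)

end SWMD
end
end

section
/- Define E_{X|Y} : [0,1] → ℝ by E_{X|Y}(ρ) = log Σ_{y: P_Y(y)>0} P_Y(y) ( Σ_{x: P_{X|Y}(x|y)>0} P_{X|Y}(x|y)^{1/(1+ρ)} )^{1+ρ}. Then E_{X|Y} is three times differentiable on [0,1] and satisfies: (a) E_{X|Y}′(0) = H(P_{X|Y}|P_Y); (b) E_{X|Y}″(0) = V(P_{X|Y}|P_Y); (c) E_{X|Y}″(ρ) ≥ 0 for all ρ ∈ [0,1]; and (d) there exists a finite constant M_X > 0 such that |E_{X|Y}‴(ρ)| ≤ M_X for all ρ ∈ [0,1]. -/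
open Real Filter Set

noncomputable section

namespace SWMD

variable {X Y : Type} [Fintype X] [Fintype Y]

open scoped Classical

/-- The Gallager-type function
`E_{X|Y}(ρ) = log Σ_{y: P_Y(y)>0} P_Y(y) (Σ_{x: P_{X|Y}(x|y)>0} P_{X|Y}(x|y)^{1/(1+ρ)})^{1+ρ}`. -/
def ExgY (P : X → Y → ℝ) (ρ : ℝ) : ℝ :=
  Real.log (∑ y, if 0 < margY P y then
    margY P y * (∑ x, if 0 < P x y / margY P y then
      (P x y / margY P y) ^ ((1 : ℝ) / (1 + ρ)) else 0) ^ (1 + ρ)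
  else 0)

set_option linter.unusedSectionVars false

section Aux
variable (P : X → Y → ℝ)

def TT (y : Y) : Finset X := Finset.univ.filter fun x => 0 < P x y
def UU : Finset Y := Finset.univ.filter fun y => 0 < margY P y
def LL (x : X) (y : Y) : ℝ := Real.log (P x y / margY P y)
def Sk (k : ℕ) (y : Y) (t : ℝ) : ℝ := ∑ x ∈ TT P y, LL P x y ^ k * Real.exp (t * LL P x y)
def mm (k : ℕ) (y : Y) (t : ℝ) : ℝ := Sk P k y t / Sk P 0 y t
def phi (y : Y) (t : ℝ) : ℝ := Real.log (Sk P 0 y t)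
def tf (ρ : ℝ) : ℝ := (1 + ρ)⁻¹
def gf (y : Y) (ρ : ℝ) : ℝ := (1 + ρ) * phi P y (tf ρ)
def phi2 (y : Y) (t : ℝ) : ℝ := mm P 2 y t - mm P 1 y t ^ 2
def phi3 (y : Y) (t : ℝ) : ℝ := mm P 3 y t - 3 * mm P 1 y t * mm P 2 y t + 2 * mm P 1 y t ^ 3
def G1 (y : Y) (ρ : ℝ) : ℝ := phi P y (tf ρ) - tf ρ * mm P 1 y (tf ρ)
def G2 (y : Y) (ρ : ℝ) : ℝ := tf ρ ^ 3 * phi2 P y (tf ρ)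
def G3 (y : Y) (ρ : ℝ) : ℝ := -(3 * tf ρ ^ 4 * phi2 P y (tf ρ) + tf ρ ^ 5 * phi3 P y (tf ρ))
def FF (ρ : ℝ) : ℝ := ∑ y ∈ UU P, margY P y * Real.exp (gf P y ρ)
def F1 (ρ : ℝ) : ℝ := ∑ y ∈ UU P, margY P y * (G1 P y ρ * Real.exp (gf P y ρ))
def F2 (ρ : ℝ) : ℝ := ∑ y ∈ UU P, margY P y * ((G2 P y ρ + G1 P y ρ ^ 2) * Real.exp (gf P y ρ))
def F3 (ρ : ℝ) : ℝ := ∑ y ∈ UU P, margY P y *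
  ((G3 P y ρ + 3 * G1 P y ρ * G2 P y ρ + G1 P y ρ ^ 3) * Real.exp (gf P y ρ))
def EE (ρ : ℝ) : ℝ := Real.log (FF P ρ)
def E1 (ρ : ℝ) : ℝ := F1 P ρ / FF P ρ
def E2 (ρ : ℝ) : ℝ := F2 P ρ / FF P ρ - (F1 P ρ / FF P ρ) ^ 2
def E3 (ρ : ℝ) : ℝ := F3 P ρ / FF P ρ - 3 * (F1 P ρ * F2 P ρ) / FF P ρ ^ 2
  + 2 * (F1 P ρ / FF P ρ) ^ 3

variable {P}

lemma margY_nonneg (h0 : ∀ x y, 0 ≤ P x y) (y : Y) : 0 ≤ margY P y :=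
  Finset.sum_nonneg fun x _ => h0 x y

lemma P_eq_zero (h0 : ∀ x y, 0 ≤ P x y) {y : Y} (hy : ¬ 0 < margY P y) (x : X) : P x y = 0 := by
  have : margY P y = 0 := le_antisymm (not_lt.mp hy) (margY_nonneg h0 y)
  exact (Finset.sum_eq_zero_iff_of_nonneg (fun x _ => h0 x y)).mp this x (Finset.mem_univ x)

lemma sum_TT (h0 : ∀ x y, 0 ≤ P x y) (y : Y) : ∑ x ∈ TT P y, P x y = margY P y := by
  refine Finset.sum_subset (Finset.filter_subset _ _) fun x _ hx => ?_
  have := Finset.mem_filter.not.mp hx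
  push_neg at this
  exact le_antisymm (this (Finset.mem_univ x)) (h0 x y)

lemma Sk0_pos (h0 : ∀ x y, 0 ≤ P x y) {y : Y} (hy : y ∈ UU P) (t : ℝ) : 0 < Sk P 0 y t := by
  have hy' : 0 < margY P y := (Finset.mem_filter.mp hy).2
  have hne : (TT P y).Nonempty := by
    by_contra hne
    rw [Finset.not_nonempty_iff_eq_empty] at hne
    have := sum_TT h0 y
    rw [hne, Finset.sum_empty] at this
    linarith
  exact Finset.sum_pos (fun x _ => by positivity) hne

lemma ExgY_eq (h0 : ∀ x y, 0 ≤ P x y) : ExgY P = EE P := by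
  funext ρ
  unfold ExgY EE FF
  congr 1
  rw [← Finset.sum_filter]
  refine Finset.sum_congr rfl fun y hy => ?_
  have hy' : 0 < margY P y := (Finset.mem_filter.mp hy).2
  congr 1
  have hin : (∑ x, if 0 < P x y / margY P y then
      (P x y / margY P y) ^ ((1 : ℝ) / (1 + ρ)) else 0) = Sk P 0 y (tf ρ) := by
    rw [← Finset.sum_filter]
    unfold Sk
    have hfil : Finset.univ.filter (fun x => 0 < P x y / margY P y) = TT P y := by
      unfold TT
      refine Finset.filter_congr fun x _ => ?_
      constructor
      · intro h; by_contra hc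
        have : P x y = 0 := le_antisymm (not_lt.mp hc) (h0 x y)
        rw [this, zero_div] at h; exact lt_irrefl 0 h
      · intro h; exact div_pos h hy'
    rw [hfil]
    refine Finset.sum_congr rfl fun x hx => ?_
    have hx' : 0 < P x y / margY P y := div_pos (Finset.mem_filter.mp hx).2 hy'
    rw [Real.rpow_def_of_pos hx', pow_zero, one_mul]
    unfold LL tf
    rw [one_div, mul_comm]
  rw [hin, Real.rpow_def_of_pos (Sk0_pos h0 hy (tf ρ))]
  unfold gf phi
  rw [mul_comm]

lemma sum_margY (hP : IsPMF2 P) : ∑ y ∈ UU P, margY P y = 1 := by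
  have h1 : ∑ y, margY P y = 1 := by
    unfold margY; rw [Finset.sum_comm]; exact hP.2
  rw [← h1]
  refine Finset.sum_subset (Finset.filter_subset _ _) fun y _ hy => ?_
  have := Finset.mem_filter.not.mp hy
  push_neg at this
  exact le_antisymm (this (Finset.mem_univ y)) (margY_nonneg hP.1 y)

lemma UU_nonempty (hP : IsPMF2 P) : (UU P).Nonempty := by
  by_contra h
  rw [Finset.not_nonempty_iff_eq_empty] at h
  have := sum_margY hP
  rw [h, Finset.sum_empty] at this
  exact one_ne_zero this.symm

lemma FF_pos (hP : IsPMF2 P) (ρ : ℝ) : 0 < FF P ρ :=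
  Finset.sum_pos (fun y hy => mul_pos (Finset.mem_filter.mp hy).2 (Real.exp_pos _))
    (UU_nonempty hP)

-- derivatives
lemma hasDerivAt_tf {ρ : ℝ} (hρ : (-1:ℝ) < ρ) : HasDerivAt tf (-(tf ρ)^2) ρ := by
  have hne : (1:ℝ) + ρ ≠ 0 := ne_of_gt (by linarith)
  have h : HasDerivAt (fun ρ : ℝ => 1 + ρ) 1 ρ := (hasDerivAt_id ρ).const_add 1
  have := h.inv hne
  refine this.congr_deriv (Eq.symm ?_)
  unfold tf
  rw [inv_pow]
  field_simp

lemma hasDerivAt_Sk (k : ℕ) (y : Y) (t : ℝ) :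
    HasDerivAt (Sk P k y) (Sk P (k+1) y t) t := by
  unfold Sk
  refine HasDerivAt.fun_sum fun x _ => ?_
  have h : HasDerivAt (fun t : ℝ => t * LL P x y) (1 * LL P x y) t :=
    (hasDerivAt_id t).mul_const _
  have := (h.exp).const_mul (LL P x y ^ k)
  refine this.congr_deriv (Eq.symm ?_)
  rw [pow_succ]
  ring

lemma hasDerivAt_mm (h0 : ∀ x y, 0 ≤ P x y) (k : ℕ) {y : Y} (hy : y ∈ UU P) (t : ℝ) :
    HasDerivAt (mm P k y) (mm P (k+1) y t - mm P k y t * mm P 1 y t) t := by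
  have h0' := (Sk0_pos h0 hy t).ne'
  have := (hasDerivAt_Sk (P := P) k y t).div (hasDerivAt_Sk (P := P) 0 y t) h0'
  refine this.congr_deriv (Eq.symm ?_)
  unfold mm
  rw [show (0:ℕ)+1 = 1 from rfl]
  field_simp

lemma hasDerivAt_phi (h0 : ∀ x y, 0 ≤ P x y) {y : Y} (hy : y ∈ UU P) (t : ℝ) :
    HasDerivAt (phi P y) (mm P 1 y t) t := by
  have := (hasDerivAt_Sk (P := P) 0 y t).log (Sk0_pos h0 hy t).ne'
  exact this

lemma hasDerivAt_phitf (h0 : ∀ x y, 0 ≤ P x y) {y : Y} (hy : y ∈ UU P) {ρ : ℝ}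
    (hρ : (-1:ℝ) < ρ) :
    HasDerivAt (fun ρ => phi P y (tf ρ)) (mm P 1 y (tf ρ) * -(tf ρ)^2) ρ :=
  (hasDerivAt_phi h0 hy (tf ρ)).comp ρ (hasDerivAt_tf hρ)

lemma hasDerivAt_mmtf (h0 : ∀ x y, 0 ≤ P x y) (k : ℕ) {y : Y} (hy : y ∈ UU P) {ρ : ℝ}
    (hρ : (-1:ℝ) < ρ) :
    HasDerivAt (fun ρ => mm P k y (tf ρ))
      ((mm P (k+1) y (tf ρ) - mm P k y (tf ρ) * mm P 1 y (tf ρ)) * -(tf ρ)^2) ρ :=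
  (hasDerivAt_mm h0 k hy (tf ρ)).comp ρ (hasDerivAt_tf hρ)

lemma tf_mul (hρ : (-1:ℝ) < ρ) : (1 + ρ) * tf ρ = 1 := by
  have hne : (1:ℝ) + ρ ≠ 0 := ne_of_gt (by linarith)
  unfold tf
  field_simp

lemma hasDerivAt_gf (h0 : ∀ x y, 0 ≤ P x y) {y : Y} (hy : y ∈ UU P) {ρ : ℝ}
    (hρ : (-1:ℝ) < ρ) : HasDerivAt (gf P y) (G1 P y ρ) ρ := by
  have h1 : HasDerivAt (fun ρ : ℝ => 1 + ρ) 1 ρ := (hasDerivAt_id ρ).const_add 1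
  have := h1.mul (hasDerivAt_phitf h0 hy hρ)
  refine this.congr_deriv (Eq.symm ?_)
  unfold G1
  have ht := tf_mul (ρ := ρ) hρ
  linear_combination mm P 1 y (tf ρ) * tf ρ * ht

lemma hasDerivAt_G1 (h0 : ∀ x y, 0 ≤ P x y) {y : Y} (hy : y ∈ UU P) {ρ : ℝ}
    (hρ : (-1:ℝ) < ρ) : HasDerivAt (G1 P y) (G2 P y ρ) ρ := by
  have h := (hasDerivAt_phitf h0 hy hρ).sub
    ((hasDerivAt_tf hρ).mul (hasDerivAt_mmtf h0 1 hy hρ))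
  refine h.congr_deriv (Eq.symm ?_)
  unfold G2 phi2
  rw [show (1:ℕ)+1 = 2 from rfl]
  ring

lemma hasDerivAt_G2 (h0 : ∀ x y, 0 ≤ P x y) {y : Y} (hy : y ∈ UU P) {ρ : ℝ}
    (hρ : (-1:ℝ) < ρ) : HasDerivAt (G2 P y) (G3 P y ρ) ρ := by
  have htf3 : HasDerivAt (fun ρ => tf ρ ^ 3) ((3:ℕ) * tf ρ ^ 2 * -(tf ρ)^2) ρ :=
    (hasDerivAt_tf hρ).pow 3
  have hphi2 : HasDerivAt (fun ρ => phi2 P y (tf ρ)) (phi3 P y (tf ρ) * -(tf ρ)^2) ρ := by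
    have h2 := hasDerivAt_mmtf h0 2 hy hρ
    have h1sq := (hasDerivAt_mmtf h0 1 hy hρ).pow 2
    have h := h2.sub h1sq
    unfold phi2
    refine h.congr_deriv (Eq.symm ?_)
    unfold phi3
    norm_num
    ring
  have h := htf3.mul hphi2
  unfold G2
  refine h.congr_deriv (Eq.symm ?_)
  unfold G3
  push_cast
  ring

lemma hasDerivAt_FF (hP : IsPMF2 P) {ρ : ℝ} (hρ : (-1:ℝ) < ρ) :
    HasDerivAt (FF P) (F1 P ρ) ρ := by
  unfold FF F1
  refine HasDerivAt.fun_sum fun y hy => ?_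
  have h := ((hasDerivAt_gf hP.1 hy hρ).exp).const_mul (margY P y)
  refine h.congr_deriv (Eq.symm ?_)
  ring

lemma hasDerivAt_F1 (hP : IsPMF2 P) {ρ : ℝ} (hρ : (-1:ℝ) < ρ) :
    HasDerivAt (F1 P) (F2 P ρ) ρ := by
  unfold F1 F2
  refine HasDerivAt.fun_sum fun y hy => ?_
  have h := (((hasDerivAt_G1 hP.1 hy hρ).mul
    ((hasDerivAt_gf hP.1 hy hρ).exp))).const_mul (margY P y)
  refine h.congr_deriv (Eq.symm ?_)
  ring

lemma hasDerivAt_F2 (hP : IsPMF2 P) {ρ : ℝ} (hρ : (-1:ℝ) < ρ) :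
    HasDerivAt (F2 P) (F3 P ρ) ρ := by
  unfold F2 F3
  refine HasDerivAt.fun_sum fun y hy => ?_
  have h := ((((hasDerivAt_G2 hP.1 hy hρ).add
    ((hasDerivAt_G1 hP.1 hy hρ).pow 2)).mul
    ((hasDerivAt_gf hP.1 hy hρ).exp))).const_mul (margY P y)
  refine h.congr_deriv (Eq.symm ?_)
  simp only [Pi.add_apply, Pi.pow_apply]
  push_cast
  ring

lemma hasDerivAt_EE (hP : IsPMF2 P) {ρ : ℝ} (hρ : (-1:ℝ) < ρ) :
    HasDerivAt (EE P) (E1 P ρ) ρ := by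
  have := (hasDerivAt_FF hP hρ).log (FF_pos hP ρ).ne'
  exact this

lemma hasDerivAt_E1 (hP : IsPMF2 P) {ρ : ℝ} (hρ : (-1:ℝ) < ρ) :
    HasDerivAt (E1 P) (E2 P ρ) ρ := by
  have h := (hasDerivAt_F1 hP hρ).div (hasDerivAt_FF hP hρ) (FF_pos hP ρ).ne'
  unfold E1
  refine h.congr_deriv (Eq.symm ?_)
  unfold E2
  have hne := (FF_pos hP ρ).ne'
  field_simp

lemma hasDerivAt_E2 (hP : IsPMF2 P) {ρ : ℝ} (hρ : (-1:ℝ) < ρ) :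
    HasDerivAt (E2 P) (E3 P ρ) ρ := by
  have hne := (FF_pos hP ρ).ne'
  have h := ((hasDerivAt_F2 hP hρ).div (hasDerivAt_FF hP hρ) hne).sub
    (((hasDerivAt_F1 hP hρ).div (hasDerivAt_FF hP hρ) hne).pow 2)
  unfold E2
  refine h.congr_deriv (Eq.symm ?_)
  unfold E3
  simp only [Pi.div_apply]
  push_cast
  field_simp
  ring

lemma deriv_EE (hP : IsPMF2 P) {ρ : ℝ} (hρ : (-1:ℝ) < ρ) :
    deriv (EE P) ρ = E1 P ρ := (hasDerivAt_EE hP hρ).deriv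

lemma deriv2_EE (hP : IsPMF2 P) {ρ : ℝ} (hρ : (-1:ℝ) < ρ) :
    deriv (deriv (EE P)) ρ = E2 P ρ := by
  have hev : deriv (EE P) =ᶠ[nhds ρ] E1 P := by
    filter_upwards [eventually_gt_nhds hρ] with z hz
    exact deriv_EE hP hz
  rw [hev.deriv_eq]
  exact (hasDerivAt_E1 hP hρ).deriv

lemma deriv3_EE (hP : IsPMF2 P) {ρ : ℝ} (hρ : (-1:ℝ) < ρ) :
    deriv (deriv (deriv (EE P))) ρ = E3 P ρ := by
  have hev : deriv (deriv (EE P)) =ᶠ[nhds ρ] E2 P := by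
    filter_upwards [eventually_gt_nhds hρ] with z hz
    exact deriv2_EE hP hz
  rw [hev.deriv_eq]
  exact (hasDerivAt_E2 hP hρ).deriv

lemma tf_zero : tf (0:ℝ) = 1 := by unfold tf; norm_num

lemma restrict_sum (h0 : ∀ x y, 0 ≤ P x y) (f : X → Y → ℝ)
    (hf : ∀ x y, P x y = 0 → f x y = 0) :
    ∑ y ∈ UU P, ∑ x ∈ TT P y, f x y = ∑ y, ∑ x, f x y := by
  have h1 : ∀ y, ∑ x ∈ TT P y, f x y = ∑ x, f x y := by
    intro y
    refine Finset.sum_subset (Finset.filter_subset _ _) fun x _ hx => ?_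
    have := Finset.mem_filter.not.mp hx
    push_neg at this
    exact hf x y (le_antisymm (this (Finset.mem_univ x)) (h0 x y))
  calc ∑ y ∈ UU P, ∑ x ∈ TT P y, f x y = ∑ y ∈ UU P, ∑ x, f x y :=
        Finset.sum_congr rfl fun y _ => h1 y
    _ = ∑ y, ∑ x, f x y := by
        refine Finset.sum_subset (Finset.filter_subset _ _) fun y _ hy => ?_
        have hy' := Finset.mem_filter.not.mp hy
        push_neg at hy'
        refine Finset.sum_eq_zero fun x _ => hf x y ?_
        exact P_eq_zero h0 (by intro h; exact absurd h (by simpa using fun h' => hy' (Finset.mem_univ y) |>.not_gt h')) x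

lemma Sk_one (h0 : ∀ x y, 0 ≤ P x y) {y : Y} (hy : y ∈ UU P) (k : ℕ) :
    Sk P k y 1 = ∑ x ∈ TT P y, LL P x y ^ k * (P x y / margY P y) := by
  unfold Sk
  refine Finset.sum_congr rfl fun x hx => ?_
  have hx' : 0 < P x y / margY P y :=
    div_pos (Finset.mem_filter.mp hx).2 (Finset.mem_filter.mp hy).2
  rw [one_mul]
  unfold LL
  rw [Real.exp_log hx']

lemma Sk0_one (h0 : ∀ x y, 0 ≤ P x y) {y : Y} (hy : y ∈ UU P) : Sk P 0 y 1 = 1 := by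
  rw [Sk_one h0 hy 0]
  simp only [pow_zero, one_mul]
  rw [← Finset.sum_div, sum_TT h0 y, div_self (Finset.mem_filter.mp hy).2.ne']

lemma gf_zero (h0 : ∀ x y, 0 ≤ P x y) {y : Y} (hy : y ∈ UU P) : gf P y 0 = 0 := by
  unfold gf phi
  rw [tf_zero, Sk0_one h0 hy]
  simp

lemma G1_zero (h0 : ∀ x y, 0 ≤ P x y) {y : Y} (hy : y ∈ UU P) :
    G1 P y 0 = -Sk P 1 y 1 := by
  unfold G1 phi mm
  rw [tf_zero, Sk0_one h0 hy]
  simp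

lemma G2_zero (h0 : ∀ x y, 0 ≤ P x y) {y : Y} (hy : y ∈ UU P) :
    G2 P y 0 = Sk P 2 y 1 - Sk P 1 y 1 ^ 2 := by
  unfold G2 phi2 mm
  rw [tf_zero, Sk0_one h0 hy]
  simp

lemma FF_zero (hP : IsPMF2 P) : FF P 0 = 1 := by
  unfold FF
  rw [← sum_margY hP]
  exact Finset.sum_congr rfl fun y hy => by rw [gf_zero hP.1 hy, Real.exp_zero, mul_one]

lemma HcondXY_eq (h0 : ∀ x y, 0 ≤ P x y) :
    HcondXY P = -∑ y ∈ UU P, ∑ x ∈ TT P y, P x y * LL P x y := by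
  unfold HcondXY LL
  rw [Finset.sum_comm]
  rw [← restrict_sum h0 (fun x y => P x y * Real.log (P x y / margY P y))
    (fun x y h => by rw [h, zero_mul])]

lemma F1_zero (hP : IsPMF2 P) : F1 P 0 = HcondXY P := by
  rw [HcondXY_eq hP.1]
  unfold F1
  have key : ∀ y ∈ UU P, margY P y * (G1 P y 0 * Real.exp (gf P y 0))
      = -(∑ x ∈ TT P y, P x y * LL P x y) := by
    intro y hy
    have hy' := (Finset.mem_filter.mp hy).2
    rw [G1_zero hP.1 hy, gf_zero hP.1 hy, Real.exp_zero, mul_one, mul_neg, Sk_one hP.1 hy 1,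
      Finset.mul_sum, neg_inj]
    refine Finset.sum_congr rfl fun x hx => ?_
    rw [pow_one]
    field_simp
  rw [Finset.sum_congr rfl key, Finset.sum_neg_distrib]

lemma F2_zero (hP : IsPMF2 P) :
    F2 P 0 = ∑ y ∈ UU P, ∑ x ∈ TT P y, P x y * LL P x y ^ 2 := by
  unfold F2
  refine Finset.sum_congr rfl fun y hy => ?_
  have hy' := (Finset.mem_filter.mp hy).2
  have hG : G2 P y 0 + G1 P y 0 ^ 2 = Sk P 2 y 1 := by
    rw [G2_zero hP.1 hy, G1_zero hP.1 hy]; ring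
  rw [gf_zero hP.1 hy, Real.exp_zero, mul_one, hG, Sk_one hP.1 hy 2, Finset.mul_sum]
  refine Finset.sum_congr rfl fun x hx => ?_
  field_simp

lemma VcondXY_eq (hP : IsPMF2 P) :
    VcondXY P = (∑ y ∈ UU P, ∑ x ∈ TT P y, P x y * LL P x y ^ 2) - HcondXY P ^ 2 := by
  unfold VcondXY
  set H := HcondXY P with hH
  rw [Finset.sum_comm]
  rw [← restrict_sum hP.1 (fun x y => P x y * (-Real.log (P x y / margY P y) - H) ^ 2)
    (fun x y h => by rw [h, zero_mul])]
  have key : ∀ y ∈ UU P, ∑ x ∈ TT P y, P x y * (-Real.log (P x y / margY P y) - H) ^ 2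
      = (∑ x ∈ TT P y, P x y * LL P x y ^ 2) + (2*H) * (∑ x ∈ TT P y, P x y * LL P x y)
        + H^2 * (∑ x ∈ TT P y, P x y) := by
    intro y hy
    rw [Finset.mul_sum, Finset.mul_sum, ← Finset.sum_add_distrib, ← Finset.sum_add_distrib]
    refine Finset.sum_congr rfl fun x hx => ?_
    unfold LL
    ring
  rw [Finset.sum_congr rfl key, Finset.sum_add_distrib, Finset.sum_add_distrib,
    ← Finset.mul_sum, ← Finset.mul_sum]
  have h1 : ∑ y ∈ UU P, ∑ x ∈ TT P y, P x y * LL P x y = -H := by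
    rw [hH, HcondXY_eq hP.1]; ring
  have h2 : ∑ y ∈ UU P, ∑ x ∈ TT P y, P x y = 1 := by
    rw [Finset.sum_congr rfl fun y _ => sum_TT hP.1 y]
    exact sum_margY hP
  rw [h1, h2]
  ring

lemma E1_zero (hP : IsPMF2 P) : E1 P 0 = HcondXY P := by
  unfold E1
  rw [FF_zero hP, F1_zero hP, div_one]

lemma E2_zero (hP : IsPMF2 P) : E2 P 0 = VcondXY P := by
  unfold E2
  rw [FF_zero hP, F1_zero hP, F2_zero hP, div_one, div_one, VcondXY_eq hP]

lemma tf_pos {ρ : ℝ} (hρ : (-1:ℝ) < ρ) : 0 < tf ρ := by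
  unfold tf
  have : (0:ℝ) < 1 + ρ := by linarith
  positivity

lemma phi2_nonneg (h0 : ∀ x y, 0 ≤ P x y) {y : Y} (hy : y ∈ UU P) (t : ℝ) :
    0 ≤ phi2 P y t := by
  have key : Sk P 1 y t ^ 2 ≤ Sk P 0 y t * Sk P 2 y t := by
    unfold Sk
    refine Finset.sum_sq_le_sum_mul_sum_of_sq_eq_mul _
      (fun x _ => by positivity) (fun x _ => by positivity) (fun x _ => by ring)
  have h0' := Sk0_pos h0 hy t
  unfold phi2 mm
  rw [sub_nonneg, div_pow, div_le_div_iff₀ (by positivity) h0']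
  nlinarith

lemma G2_nonneg (h0 : ∀ x y, 0 ≤ P x y) {y : Y} (hy : y ∈ UU P) {ρ : ℝ}
    (hρ : (-1:ℝ) < ρ) : 0 ≤ G2 P y ρ :=
  mul_nonneg (pow_nonneg (tf_pos hρ).le 3) (phi2_nonneg h0 hy (tf ρ))

lemma E2_nonneg (hP : IsPMF2 P) {ρ : ℝ} (hρ : (-1:ℝ) < ρ) : 0 ≤ E2 P ρ := by
  have hFF := FF_pos hP ρ
  have key1 : F1 P ρ ^ 2 ≤ FF P ρ * ∑ y ∈ UU P, margY P y * (G1 P y ρ ^ 2 * Real.exp (gf P y ρ)) := by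
    unfold F1 FF
    refine Finset.sum_sq_le_sum_mul_sum_of_sq_eq_mul _
      (fun y hy => mul_nonneg (margY_nonneg hP.1 y) (Real.exp_pos _).le)
      (fun y hy => mul_nonneg (margY_nonneg hP.1 y) (by positivity))
      (fun y hy => by ring)
  have key2 : (∑ y ∈ UU P, margY P y * (G1 P y ρ ^ 2 * Real.exp (gf P y ρ))) ≤ F2 P ρ := by
    unfold F2
    refine Finset.sum_le_sum fun y hy => ?_
    have hm := margY_nonneg hP.1 y
    have hG2 := G2_nonneg hP.1 hy hρ
    have he := (Real.exp_pos (gf P y ρ)).le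
    have := mul_nonneg (mul_nonneg hm hG2) he
    nlinarith
  have key : F1 P ρ ^ 2 ≤ FF P ρ * F2 P ρ :=
    key1.trans (mul_le_mul_of_nonneg_left key2 hFF.le)
  unfold E2
  rw [sub_nonneg, div_pow, div_le_div_iff₀ (by positivity) hFF]
  nlinarith

lemma contDiffAt_EE (hP : IsPMF2 P) {ρ : ℝ} (hρ : (-1:ℝ) < ρ) :
    ContDiffAt ℝ 3 (EE P) ρ := by
  have hne : (1:ℝ) + ρ ≠ 0 := ne_of_gt (by linarith)
  have htf : ContDiffAt ℝ 3 tf ρ := by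
    have h : ContDiffAt ℝ 3 (fun ρ : ℝ => 1 + ρ) ρ := contDiffAt_const.add contDiffAt_id
    exact h.inv hne
  have hSk : ∀ (k : ℕ) (y : Y), ContDiffAt ℝ 3 (fun ρ => Sk P k y (tf ρ)) ρ := by
    intro k y
    unfold Sk
    exact ContDiffAt.sum fun x _ => contDiffAt_const.mul ((htf.mul contDiffAt_const).exp)
  have hgf : ∀ y ∈ UU P, ContDiffAt ℝ 3 (gf P y) ρ := by
    intro y hy
    unfold gf phi
    exact (contDiffAt_const.add contDiffAt_id).mul
      ((hSk 0 y).log (Sk0_pos hP.1 hy (tf ρ)).ne')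
  have hFF : ContDiffAt ℝ 3 (FF P) ρ := by
    unfold FF
    exact ContDiffAt.sum fun y hy => contDiffAt_const.mul (hgf y hy).exp
  exact hFF.log (FF_pos hP ρ).ne'

lemma continuousAt_E3 (hP : IsPMF2 P) {ρ : ℝ} (hρ : (-1:ℝ) < ρ) :
    ContinuousAt (E3 P) ρ := by
  have hne := (FF_pos hP ρ).ne'
  have hFFc : ContinuousAt (FF P) ρ := (hasDerivAt_FF hP hρ).continuousAt
  have hF1c : ContinuousAt (F1 P) ρ := (hasDerivAt_F1 hP hρ).continuousAt
  have hF2c : ContinuousAt (F2 P) ρ := (hasDerivAt_F2 hP hρ).continuousAt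
  have htfc : ContinuousAt tf ρ := (hasDerivAt_tf hρ).continuousAt
  have hmmc : ∀ (k : ℕ) (y : Y), y ∈ UU P → ContinuousAt (fun ρ => mm P k y (tf ρ)) ρ :=
    fun k y hy => ((hasDerivAt_mm hP.1 k hy (tf ρ)).continuousAt).comp htfc
  have hF3c : ContinuousAt (F3 P) ρ := by
    unfold F3
    refine tendsto_finset_sum _ fun y hy => ?_
    have hG1c : ContinuousAt (G1 P y) ρ := (hasDerivAt_G1 hP.1 hy hρ).continuousAt
    have hG2c : ContinuousAt (G2 P y) ρ := (hasDerivAt_G2 hP.1 hy hρ).continuousAt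
    have hgfc : ContinuousAt (gf P y) ρ := (hasDerivAt_gf hP.1 hy hρ).continuousAt
    have hphi2c : ContinuousAt (fun ρ => phi2 P y (tf ρ)) ρ := by
      unfold phi2
      exact (hmmc 2 y hy).sub ((hmmc 1 y hy).pow 2)
    have hphi3c : ContinuousAt (fun ρ => phi3 P y (tf ρ)) ρ := by
      unfold phi3
      exact ((hmmc 3 y hy).sub ((continuousAt_const.mul (hmmc 1 y hy)).mul
        (hmmc 2 y hy))).add (continuousAt_const.mul ((hmmc 1 y hy).pow 3))
    have hG3c : ContinuousAt (G3 P y) ρ := by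
      unfold G3
      exact (((continuousAt_const.mul (htfc.pow 4)).mul hphi2c).add
        ((htfc.pow 5).mul hphi3c)).neg
    exact continuousAt_const.mul
      (((hG3c.add ((continuousAt_const.mul hG1c).mul hG2c)).add (hG1c.pow 3)).mul hgfc.rexp)
  unfold E3
  exact ((hF3c.div hFFc hne).sub
    ((continuousAt_const.mul (hF1c.mul hF2c)).div (hFFc.pow 2) (pow_ne_zero _ hne))).add
    (continuousAt_const.mul ((hF1c.div hFFc hne).pow 3))

end Aux

/-- **Lemma 2**: `E_{X|Y}` is three times differentiable on `[0,1]`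
(derivatives at the endpoints being one-sided, i.e. taken for the globally
defined function given by the same formula), with
`E_{X|Y}′(0) = H(P_{X|Y}|P_Y)`, `E_{X|Y}″(0) = V(P_{X|Y}|P_Y)`,
`E_{X|Y}″ ≥ 0` on `[0,1]`, and a finite positive bound `M_X` on `|E_{X|Y}‴|`
over `[0,1]`. -/
theorem ExgY_derivatives [Nonempty X] [Nonempty Y]
    (P : X → Y → ℝ) (hP : IsPMF2 P) :
    (∀ ρ ∈ Set.Icc (0:ℝ) 1, ContDiffAt ℝ 3 (ExgY P) ρ) ∧
    deriv (ExgY P) 0 = HcondXY P ∧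
    deriv (deriv (ExgY P)) 0 = VcondXY P ∧
    (∀ ρ ∈ Set.Icc (0:ℝ) 1, 0 ≤ deriv (deriv (ExgY P)) ρ) ∧
    (∃ M : ℝ, 0 < M ∧ ∀ ρ ∈ Set.Icc (0:ℝ) 1,
      |deriv (deriv (deriv (ExgY P))) ρ| ≤ M) := by
  rw [ExgY_eq hP.1]
  refine ⟨?_, ?_, ?_, fun ρ hρ => ?_, ?_⟩
  · intro ρ hρ
    obtain ⟨h1, h2⟩ := hρ
    exact contDiffAt_EE hP (by linarith)
  · rw [deriv_EE hP (by norm_num), E1_zero hP]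
  · rw [deriv2_EE hP (by norm_num), E2_zero hP]
  · obtain ⟨h1, h2⟩ := hρ
    rw [deriv2_EE hP (show (-1:ℝ) < ρ by linarith)]
    exact E2_nonneg hP (by linarith)
  · obtain ⟨C, hC⟩ := (isCompact_Icc (a := (0:ℝ)) (b := 1)).exists_bound_of_continuousOn
      (f := E3 P) (fun ρ hρ =>
        (continuousAt_E3 hP (show (-1:ℝ) < ρ by linarith [hρ.1, hρ.2])).continuousWithinAt)
    refine ⟨max C 1, lt_of_lt_of_le one_pos (le_max_right _ _), fun ρ hρ => ?_⟩
    rw [deriv3_EE hP (show (-1:ℝ) < ρ by linarith [hρ.1, hρ.2])]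
    calc |E3 P ρ| = ‖E3 P ρ‖ := (Real.norm_eq_abs _).symm
      _ ≤ C := hC ρ hρ
      _ ≤ max C 1 := le_max_left _ _

end SWMD
end
end

section
/- Let m ∈ ℕ and let f, g, g_1, …, g_m : [0,1] → ℝ be continuous functions. Let {a_n}, {b_n}, {c_{1,n}}, …, {c_{m,n}} be sequences of positive reals with b_n/a_n → 0 and c_{i,n}/b_n → 0 for each i ∈ {1,…,m}. Define f* = inf_{γ∈[0,1]} f(γ) and g* = inf{ g(γ) : γ ∈ [0,1], f(γ) = f* } (the set {γ ∈ [0,1] : f(γ) = f*} is nonempty by compactness and continuity). Then inf_{γ∈[0,1]} ( a_n f(γ) + b_n g(γ) + Σ_{i=1}^m c_{i,n} g_i(γ) ) = a_n f* + b_n g* + o(b_n), i.e., ( inf_{γ∈[0,1]} ( a_n f(γ) + b_n g(γ) + Σ_{i=1}^m c_{i,n} g_i(γ) ) − a_n f* − b_n g* ) / b_n → 0 as n → ∞. -/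
open Filter Set

/-- **Lemma 4** (a Polyanskiy-type asymptotic expansion of a parametric
infimum): for continuous `f, g, g₁, …, g_m` on `[0,1]` and positive sequences
`a_n, b_n, c_{i,n}` with `b_n/a_n → 0` and `c_{i,n}/b_n → 0`, one has
`inf_{γ∈[0,1]} (a_n f(γ) + b_n g(γ) + Σ_i c_{i,n} g_i(γ)) = a_n f* + b_n g* + o(b_n)`,
where `f* = inf_{[0,1]} f` and `g* = inf{g(γ) : γ ∈ [0,1], f(γ) = f*}`. -/
theorem inf_asymptotic_expansion (m : ℕ) (f g : ℝ → ℝ) (G : Fin m → ℝ → ℝ)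
    (hf : ContinuousOn f (Set.Icc 0 1)) (hg : ContinuousOn g (Set.Icc 0 1))
    (hG : ∀ i, ContinuousOn (G i) (Set.Icc 0 1))
    (a b : ℕ → ℝ) (c : Fin m → ℕ → ℝ)
    (ha : ∀ n, 0 < a n) (hb : ∀ n, 0 < b n) (hc : ∀ i n, 0 < c i n)
    (hba : Tendsto (fun n => b n / a n) atTop (nhds 0))
    (hcb : ∀ i, Tendsto (fun n => c i n / b n) atTop (nhds 0)) :
    Tendsto (fun n =>
      (sInf ((fun γ => a n * f γ + b n * g γ + ∑ i, c i n * G i γ) '' Set.Icc 0 1)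
        - a n * sInf (f '' Set.Icc 0 1)
        - b n * sInf (g '' {γ | γ ∈ Set.Icc (0:ℝ) 1 ∧ f γ = sInf (f '' Set.Icc 0 1)}))
        / b n) atTop (nhds 0) := by
  have hIcc : IsCompact (Set.Icc (0:ℝ) 1) := isCompact_Icc
  have hne : (Set.Icc (0:ℝ) 1).Nonempty := ⟨0, le_refl 0, zero_le_one⟩
  set fs := sInf (f '' Set.Icc (0:ℝ) 1) with hfsdef
  obtain ⟨γ₀, hγ₀, hfγ₀⟩ := hIcc.exists_sInf_image_eq hne hf
  set K : Set ℝ := {γ | γ ∈ Set.Icc (0:ℝ) 1 ∧ f γ = fs} with hKdef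
  set gs := sInf (g '' K) with hgsdef
  have hKeq : K = Set.Icc (0:ℝ) 1 ∩ f ⁻¹' {fs} := by
    ext x; simp [hKdef, Set.mem_inter_iff]
  have hKclosed : IsClosed K := by
    rw [hKeq]
    exact hf.preimage_isClosed_of_isClosed isClosed_Icc isClosed_singleton
  have hKsub : K ⊆ Set.Icc (0:ℝ) 1 := fun x hx => hx.1
  have hKcomp : IsCompact K := hIcc.of_isClosed_subset hKclosed hKsub
  have hKne : K.Nonempty := ⟨γ₀, hγ₀, hfγ₀.symm⟩
  obtain ⟨γs, hγs, hgγs⟩ := hKcomp.exists_sInf_image_eq hKne (hg.mono hKsub)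
  have hbdf : BddBelow (f '' Set.Icc (0:ℝ) 1) := hIcc.bddBelow_image hf
  have hfle : ∀ γ ∈ Set.Icc (0:ℝ) 1, fs ≤ f γ := fun γ hγ => csInf_le hbdf ⟨γ, hγ, rfl⟩
  have hgleK : ∀ γ ∈ K, gs ≤ g γ := fun γ hγ =>
    csInf_le (hKcomp.bddBelow_image (hg.mono hKsub)) ⟨γ, hγ, rfl⟩
  set Lg := sInf (g '' Set.Icc (0:ℝ) 1) with hLgdef
  have hLg : ∀ γ ∈ Set.Icc (0:ℝ) 1, Lg ≤ g γ := fun γ hγ =>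
    csInf_le (hIcc.bddBelow_image hg) ⟨γ, hγ, rfl⟩
  set L : Fin m → ℝ := fun i => sInf (G i '' Set.Icc (0:ℝ) 1) with hLdef
  have hL : ∀ i, ∀ γ ∈ Set.Icc (0:ℝ) 1, L i ≤ G i γ := fun i γ hγ =>
    csInf_le (hIcc.bddBelow_image (hG i)) ⟨γ, hγ, rfl⟩
  -- the two auxiliary vanishing sequences
  have hU : Tendsto (fun n => ∑ i, (c i n / b n) * G i γs) atTop (nhds 0) := by
    have := tendsto_finset_sum Finset.univ (fun i (_ : i ∈ Finset.univ) => (hcb i).mul_const (G i γs))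
    simpa using this
  have hV : Tendsto (fun n => ∑ i, (c i n / b n) * L i) atTop (nhds 0) := by
    have := tendsto_finset_sum Finset.univ (fun i (_ : i ∈ Finset.univ) => (hcb i).mul_const (L i))
    simpa using this
  rw [NormedAddCommGroup.tendsto_nhds_zero]
  intro ε hε
  set ε' := ε / 3 with hε'def
  have hε' : 0 < ε' := by positivity
  -- the key compactness gap
  obtain ⟨δ, hδpos, hδ⟩ : ∃ δ > 0, ∀ γ ∈ Set.Icc (0:ℝ) 1, g γ ≤ gs - ε' → fs + δ ≤ f γ := by
    set S : Set ℝ := {γ ∈ Set.Icc (0:ℝ) 1 | g γ ≤ gs - ε'} with hSdef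
    have hSsub : S ⊆ Set.Icc (0:ℝ) 1 := fun x hx => hx.1
    by_cases hSne : S.Nonempty
    · have hSclosed : IsClosed S := by
        have hSeq : S = Set.Icc (0:ℝ) 1 ∩ g ⁻¹' Set.Iic (gs - ε') := by
          ext x; simp [hSdef, Set.mem_inter_iff]
        rw [hSeq]
        exact hg.preimage_isClosed_of_isClosed isClosed_Icc isClosed_Iic
      have hScomp : IsCompact S := hIcc.of_isClosed_subset hSclosed hSsub
      obtain ⟨γS, hγS, hfγS⟩ := hScomp.exists_sInf_image_eq hSne (hf.mono hSsub)
      have hγSnotK : γS ∉ K := by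
        intro hmem
        have h1 := hgleK γS hmem
        have h2 := hγS.2
        linarith
      have hfgt : fs < f γS := by
        rcases lt_or_eq_of_le (hfle γS (hSsub hγS)) with h | h
        · exact h
        · exact absurd ⟨hSsub hγS, h.symm⟩ hγSnotK
      refine ⟨f γS - fs, by linarith, fun γ hγ hgγ => ?_⟩
      have hγmem : γ ∈ S := ⟨hγ, hgγ⟩
      have hle : sInf (f '' S) ≤ f γ :=
        csInf_le (hScomp.bddBelow_image (hf.mono hSsub)) ⟨γ, hγmem, rfl⟩
      rw [hfγS] at hle
      linarith
    · exact ⟨1, one_pos, fun γ hγ hgγ => (hSne ⟨γ, hγ, hgγ⟩).elim⟩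
  set C := max 1 (gs - ε' - Lg) with hCdef
  have hCpos : 0 < C := lt_of_lt_of_le one_pos (le_max_left _ _)
  have h1 : ∀ᶠ n in atTop, b n / a n < δ / C :=
    hba.eventually (eventually_lt_nhds (by positivity))
  have h2 : ∀ᶠ n in atTop, |∑ i, (c i n / b n) * L i| < ε' := by
    have := (NormedAddCommGroup.tendsto_nhds_zero.mp hV) ε' hε'
    simpa [Real.norm_eq_abs] using this
  have h3 : ∀ᶠ n in atTop, ∑ i, (c i n / b n) * G i γs < ε' :=
    hU.eventually (eventually_lt_nhds hε')
  filter_upwards [h1, h2, h3] with n h1n h2n h3n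
  have hbn := hb n
  have han := ha n
  have hcont : ContinuousOn (fun γ => a n * f γ + b n * g γ + ∑ i, c i n * G i γ)
      (Set.Icc (0:ℝ) 1) := by
    refine ((continuousOn_const.mul hf).add (continuousOn_const.mul hg)).add ?_
    exact continuousOn_finset_sum _ (fun i _ => continuousOn_const.mul (hG i))
  have hImne : ((fun γ => a n * f γ + b n * g γ + ∑ i, c i n * G i γ) '' Set.Icc (0:ℝ) 1).Nonempty :=
    hne.image _
  have hbdd : BddBelow ((fun γ => a n * f γ + b n * g γ + ∑ i, c i n * G i γ) '' Set.Icc (0:ℝ) 1) :=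
    hIcc.bddBelow_image hcont
  -- upper bound
  have hupper : sInf ((fun γ => a n * f γ + b n * g γ + ∑ i, c i n * G i γ) '' Set.Icc (0:ℝ) 1)
      ≤ a n * fs + b n * gs + ∑ i, c i n * G i γs := by
    have hmem : (fun γ => a n * f γ + b n * g γ + ∑ i, c i n * G i γ) γs
        ∈ (fun γ => a n * f γ + b n * g γ + ∑ i, c i n * G i γ) '' Set.Icc (0:ℝ) 1 :=
      ⟨γs, hKsub hγs, rfl⟩
    have hle := csInf_le hbdd hmem
    calc sInf _ ≤ a n * f γs + b n * g γs + ∑ i, c i n * G i γs := hle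
      _ = a n * fs + b n * gs + ∑ i, c i n * G i γs := by rw [hγs.2, ← hgγs]
  -- lower bound
  have hlower : a n * fs + b n * (gs - ε') + ∑ i, c i n * L i
      ≤ sInf ((fun γ => a n * f γ + b n * g γ + ∑ i, c i n * G i γ) '' Set.Icc (0:ℝ) 1) := by
    apply le_csInf hImne
    rintro y ⟨γ, hγ, rfl⟩
    have hsum : ∑ i, c i n * L i ≤ ∑ i, c i n * G i γ :=
      Finset.sum_le_sum fun i _ => mul_le_mul_of_nonneg_left (hL i γ hγ) (hc i n).le
    by_cases hcase : g γ ≤ gs - ε'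
    · have hfγ := hδ γ hγ hcase
      have hgγ := hLg γ hγ
      have hineq : b n * (gs - ε' - Lg) ≤ a n * δ := by
        have hbc : b n * C < δ * a n := (div_lt_div_iff₀ han hCpos).mp h1n
        have hle2 : gs - ε' - Lg ≤ C := le_max_right _ _
        nlinarith
      have A1 := mul_le_mul_of_nonneg_left hfγ han.le
      have A2 := mul_le_mul_of_nonneg_left hgγ hbn.le
      dsimp only
      linarith
    · push_neg at hcase
      have A1 := mul_le_mul_of_nonneg_left (hfle γ hγ) han.le
      have A2 := mul_le_mul_of_nonneg_left hcase.le hbn.le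
      dsimp only
      linarith
  have hsum_eqL : ∑ i, c i n * L i = b n * ∑ i, (c i n / b n) * L i := by
    rw [Finset.mul_sum]
    refine Finset.sum_congr rfl fun i _ => ?_
    field_simp
  have hsum_eqG : ∑ i, c i n * G i γs = b n * ∑ i, (c i n / b n) * G i γs := by
    rw [Finset.mul_sum]
    refine Finset.sum_congr rfl fun i _ => ?_
    field_simp
  rw [Real.norm_eq_abs, abs_lt]
  obtain ⟨h2l, h2r⟩ := abs_lt.mp h2n
  constructor
  · rw [lt_div_iff₀ hbn]
    rw [hsum_eqL] at hlower
    have hbV := mul_lt_mul_of_pos_left h2l hbn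
    have hbe : 3 * (b n * ε') = b n * ε := by rw [hε'def]; ring
    have hbp : 0 < b n * ε' := by positivity
    linarith
  · rw [div_lt_iff₀ hbn]
    rw [hsum_eqG] at hupper
    have hbU := mul_lt_mul_of_pos_left h3n hbn
    have hbe : 3 * (b n * ε') = b n * ε := by rw [hε'def]; ring
    have hbp : 0 < b n * ε' := by positivity
    linarith
end

section
/- Let V_c = V(P_{X|Y}|P_Y) > 0 and V_j = V(P_XY) > 0, let θ1 > 0, θ1 + θ2 > 0, and assume the strict inequalities (V_j − V_c)/(V_j + V_c) < θ2/θ1 < (V_j − V_c)/(2 V_c) hold (which force V_j ≠ V_c and θ2 ≠ 0). Define f : [0,1] → ℝ by f(γ) = (θ1 + (1−γ)θ2)² / (2(γ V_c + (1−γ) V_j)) and set γ* = −θ1/θ2 + (V_c + V_j)/(V_j − V_c). Then γ* ∈ (0,1), f attains its minimum over [0,1] at γ*, the minimum value is f(γ*) = 2 θ2 (θ1 V_j − (θ1+θ2) V_c) / (V_j − V_c)², and moreover f(γ*) < (θ1+θ2)² / (2 V_j). -/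
open Real Filter Set

noncomputable section

namespace SWMD

variable {X Y : Type} [Fintype X] [Fintype Y]

/-- With `V_c = V(P_{X|Y}|P_Y) > 0`, `V_j = V(P_XY) > 0`, `θ1 > 0`,
`θ1 + θ2 > 0` and `(V_j−V_c)/(V_j+V_c) < θ2/θ1 < (V_j−V_c)/(2V_c)`, the
minimizer `γ* = −θ1/θ2 + (V_c+V_j)/(V_j−V_c)` of
`f(γ) = (θ1+(1−γ)θ2)²/(2(γ V_c+(1−γ)V_j))` lies in `(0,1)`, `f` attains its
minimum over `[0,1]` at `γ*`, the minimum value equals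
`2θ2(θ1 V_j − (θ1+θ2)V_c)/(V_j−V_c)²`, and this value is strictly smaller than
`(θ1+θ2)²/(2V_j)`. -/
theorem interior_minimizer [Nonempty X] [Nonempty Y]
    (P : X → Y → ℝ) (hP : IsPMF2 P)
    (hVc : 0 < VcondXY P) (hVj : 0 < Vjoint P)
    (θ1 θ2 : ℝ) (hθ1 : 0 < θ1) (hsum : 0 < θ1 + θ2)
    (hlow : (Vjoint P - VcondXY P) / (Vjoint P + VcondXY P) < θ2 / θ1)
    (hhigh : θ2 / θ1 < (Vjoint P - VcondXY P) / (2 * VcondXY P))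
    (f : ℝ → ℝ)
    (hf : ∀ γ : ℝ, f γ = (θ1 + (1 - γ) * θ2) ^ 2 /
        (2 * (γ * VcondXY P + (1 - γ) * Vjoint P)))
    (γs : ℝ)
    (hγs : γs = -θ1 / θ2 + (VcondXY P + Vjoint P) / (Vjoint P - VcondXY P)) :
    γs ∈ Set.Ioo (0:ℝ) 1 ∧
    (∀ γ ∈ Set.Icc (0:ℝ) 1, f γs ≤ f γ) ∧
    f γs = 2 * θ2 * (θ1 * Vjoint P - (θ1 + θ2) * VcondXY P) /
      (Vjoint P - VcondXY P) ^ 2 ∧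
    f γs < (θ1 + θ2) ^ 2 / (2 * Vjoint P) := by
  set Vc := VcondXY P with hVcdef
  set Vj := Vjoint P with hVjdef
  have hden1 : 0 < Vj + Vc := by linarith
  have h1 : (Vj - Vc) * θ1 < θ2 * (Vj + Vc) := by
    rwa [div_lt_div_iff₀ hden1 hθ1] at hlow
  have h2 : θ2 * (2 * Vc) < (Vj - Vc) * θ1 := by
    rwa [div_lt_div_iff₀ hθ1 (by linarith : (0:ℝ) < 2 * Vc)] at hhigh
  have hθ2D : 0 < θ2 * (Vj - Vc) := by nlinarith
  have hθ2 : θ2 ≠ 0 := by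
    intro h; rw [h] at hθ2D; simp at hθ2D
  have hD : Vj - Vc ≠ 0 := by
    intro h; rw [h] at hθ2D; simp at hθ2D
  have hγs' : γs = (θ2 * (Vc + Vj) - θ1 * (Vj - Vc)) / (θ2 * (Vj - Vc)) := by
    rw [hγs]; field_simp; ring
  have h0 : 0 < γs := by
    rw [hγs']; exact div_pos (by nlinarith) hθ2D
  have hlt1 : γs < 1 := by
    rw [hγs', div_lt_one hθ2D]; nlinarith
  have key : ∀ γ : ℝ, 0 < γ * Vc + (1 - γ) * Vj →
      f γ = 2 * θ2 * (θ1 * Vj - (θ1 + θ2) * Vc) / (Vj - Vc) ^ 2 +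
        ((θ1 + θ2) - γ * θ2 - (2 * θ2 / (Vj - Vc)) * (γ * Vc + (1 - γ) * Vj)) ^ 2 /
          (2 * (γ * Vc + (1 - γ) * Vj)) := by
    intro γ hd
    rw [hf]
    field_simp
    ring
  have hdγs : 0 < γs * Vc + (1 - γs) * Vj := by
    have t1 := mul_pos h0 hVc
    have t2 := mul_pos (by linarith : (0:ℝ) < 1 - γs) hVj
    linarith
  have hzero : (θ1 + θ2) - γs * θ2 - (2 * θ2 / (Vj - Vc)) * (γs * Vc + (1 - γs) * Vj) = 0 := by
    rw [hγs]; field_simp; ring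
  have hfγs : f γs = 2 * θ2 * (θ1 * Vj - (θ1 + θ2) * Vc) / (Vj - Vc) ^ 2 := by
    rw [key γs hdγs, hzero]; simp
  refine ⟨⟨h0, hlt1⟩, ?_, hfγs, ?_⟩
  · intro γ hγ
    have hd : 0 < γ * Vc + (1 - γ) * Vj := by
      rcases lt_or_ge γ 1 with h | h
      · have t1 := mul_nonneg hγ.1 hVc.le
        have t2 := mul_pos (by linarith : (0:ℝ) < 1 - γ) hVj
        linarith
      · have hγ1 : γ = 1 := le_antisymm hγ.2 h
        rw [hγ1]; simpa using hVc
    rw [key γ hd, hfγs]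
    have hsq : 0 ≤ ((θ1 + θ2) - γ * θ2 - (2 * θ2 / (Vj - Vc)) * (γ * Vc + (1 - γ) * Vj)) ^ 2 /
        (2 * (γ * Vc + (1 - γ) * Vj)) := div_nonneg (sq_nonneg _) (by linarith)
    linarith
  · have hd0 : 0 < (0:ℝ) * Vc + (1 - 0) * Vj := by simpa using hVj
    have hk0 := key 0 hd0
    have hf0 : f 0 = (θ1 + θ2) ^ 2 / (2 * Vj) := by
      rw [hf]; norm_num
    have ht : (θ1 + θ2) - 0 * θ2 - (2 * θ2 / (Vj - Vc)) * ((0:ℝ) * Vc + (1 - 0) * Vj) ≠ 0 := by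
      intro h
      have hmul : ((θ1 + θ2) - 0 * θ2 - (2 * θ2 / (Vj - Vc)) * ((0:ℝ) * Vc + (1 - 0) * Vj)) *
          (Vj - Vc) = (θ1 + θ2) * (Vj - Vc) - 2 * θ2 * Vj := by
        field_simp
        ring
      rw [h, zero_mul] at hmul
      nlinarith
    have hpos : 0 < ((θ1 + θ2) - 0 * θ2 - (2 * θ2 / (Vj - Vc)) * ((0:ℝ) * Vc + (1 - 0) * Vj)) ^ 2 /
        (2 * ((0:ℝ) * Vc + (1 - 0) * Vj)) :=
      div_pos (by positivity) (by linarith)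
    rw [hfγs]
    have := hk0
    rw [hf0] at this
    linarith

end SWMD
end
end
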